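/- Let G be a group and let H and K be relatively prime subgroups of G. Then for every γ ∈ G, the number of cosets in G/(H ∩ K) fixed by left multiplication by γ equals the product of the number of cosets in G/H fixed by γ and the number of cosets in G/K fixed by γ. -/
import Mathlib

private def fixedProdEquiv {A B : Type*} {γG : Type*} [Group γG] [MulAction γG A]
    [MulAction γG B] (γ : γG) :
    {p : A × B // γ • p = p} ≃ {a : A // γ • a = a} × {b : B // γ • b = b} where
  toFun p := (⟨p.1.1, congrArg Prod.fst p.2⟩, ⟨p.1.2, congrArg Prod.snd p.2⟩)
  invFun q := ⟨(q.1.1, q.2.1), Prod.ext q.1.2 q.2.2⟩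
  left_inv p := by ext <;> rfl
  right_inv q := by ext <;> rfl

/-- If `H` and `K` are relatively prime subgroups of `G`, then for every `γ ∈ G` the number of
cosets of `G ⧸ (H ⊓ K)` fixed by left multiplication by `γ` is the product of the numbers of
fixed cosets in `G ⧸ H` and in `G ⧸ K`. -/
theorem stmt7 {G : Type*} [Group G] (H K : Subgroup G)
    (hfin : (H ⊓ K).FiniteIndex)
    (hHK : ∀ g : G, ∃ h ∈ H, ∃ k ∈ K, g = h * k) (γ : G) :
    Nat.card {x : G ⧸ (H ⊓ K) // γ • x = x} =
      Nat.card {x : G ⧸ H // γ • x = x} * Nat.card {x : G ⧸ K // γ • x = x} := by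
  let f : G ⧸ (H ⊓ K) → (G ⧸ H) × (G ⧸ K) :=
    Quotient.lift (fun g : G => ((g : G ⧸ H), (g : G ⧸ K))) (by
      intro a b hab
      have hm : a⁻¹ * b ∈ H ⊓ K := QuotientGroup.leftRel_apply.mp hab
      rw [Subgroup.mem_inf] at hm
      exact Prod.ext (QuotientGroup.eq.mpr hm.1) (QuotientGroup.eq.mpr hm.2))
  have hinj : Function.Injective f := by
    intro x y
    induction x using Quotient.inductionOn
    induction y using Quotient.inductionOn
    rename_i a b
    intro h
    have h1 : (a : G ⧸ H) = b := congrArg Prod.fst h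
    have h2 : (a : G ⧸ K) = b := congrArg Prod.snd h
    exact Quotient.sound (QuotientGroup.leftRel_apply.mpr
      (Subgroup.mem_inf.mpr ⟨QuotientGroup.eq.mp h1, QuotientGroup.eq.mp h2⟩))
  have hsurj : Function.Surjective f := by
    rintro ⟨x, y⟩
    induction x using Quotient.inductionOn
    induction y using Quotient.inductionOn
    rename_i a b
    obtain ⟨h, hh, k, hk, hab⟩ := hHK (a⁻¹ * b)
    refine ⟨((a * h : G) : G ⧸ (H ⊓ K)), Prod.ext ?_ ?_⟩
    · show ((a * h : G) : G ⧸ H) = (a : G ⧸ H)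
      rw [QuotientGroup.eq]
      have : (a * h)⁻¹ * a = h⁻¹ := by group
      rw [this]
      exact inv_mem hh
    · show ((a * h : G) : G ⧸ K) = (b : G ⧸ K)
      rw [QuotientGroup.eq]
      have : (a * h)⁻¹ * b = h⁻¹ * (a⁻¹ * b) := by group
      rw [this, hab]
      have : h⁻¹ * (h * k) = k := by group
      rw [this]
      exact hk
  have hcomm : ∀ x : G ⧸ (H ⊓ K), f (γ • x) = γ • f x := by
    intro x
    induction x using Quotient.inductionOn
    rfl
  let e : G ⧸ (H ⊓ K) ≃ (G ⧸ H) × (G ⧸ K) := Equiv.ofBijective f ⟨hinj, hsurj⟩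
  have key : {x : G ⧸ (H ⊓ K) // γ • x = x} ≃
      {p : (G ⧸ H) × (G ⧸ K) // γ • p = p} :=
    (Equiv.subtypeEquiv e (fun x => by
      constructor
      · intro hx
        exact (hcomm x).symm.trans (congrArg f hx)
      · intro hx
        exact hinj ((hcomm x).trans hx)))
  rw [Nat.card_congr (key.trans (fixedProdEquiv γ)), Nat.card_prod]
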